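/- Let n ≥ 1, c > 2, and r ∈ ℕ. Then l1(g^r_c) ≤ c/(c−2). -/

import Mathlib

open scoped ComplexOrder

noncomputable section

/-- The Weyl algebra `W_n`: a complex `*`-algebra generated by `a 1, …, a n` and their
adjoints, satisfying the canonical commutation relations, in which the normally ordered
monomials `(a*)^s a^t` form a basis (this pins the algebra down up to `*`-isomorphism). -/
structure WeylAlgebra (n : ℕ) where
  carrier : Type
  [ring : Ring carrier]
  [alg : Algebra ℂ carrier]
  [starRing : StarRing carrier]
  [starModule : StarModule ℂ carrier]
  a : Fin n → carrier
  comm_aa : ∀ i j, a i * a j = a j * a i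
  comm_ss : ∀ i j, star (a i) * star (a j) = star (a j) * star (a i)
  ccr : ∀ i j : Fin n, a i * star (a j) - star (a j) * a i = if i = j then 1 else 0
  basis : Module.Basis ((Fin n → ℕ) × (Fin n → ℕ)) ℂ carrier
  basis_eq : ∀ st : (Fin n → ℕ) × (Fin n → ℕ),
    basis st = (List.ofFn fun i => star (a i) ^ st.1 i).prod *
               (List.ofFn fun i => (a i) ^ st.2 i).prod

attribute [instance] WeylAlgebra.ring WeylAlgebra.alg WeylAlgebra.starRing
  WeylAlgebra.starModule

namespace WeylAlgebra

variable {n : ℕ} (W : WeylAlgebra n)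

/-- The monomial `a^t = ∏ i, (a i)^(t i)`. -/
def amon (t : Fin n → ℕ) : W.carrier := (List.ofFn fun i => W.a i ^ t i).prod

/-- The normally ordered monomial `(a*)^s a^t`. -/
def nmon (s t : Fin n → ℕ) : W.carrier :=
  (List.ofFn fun i => star (W.a i) ^ s i).prod * (List.ofFn fun i => W.a i ^ t i).prod

/-- The `l₁`-norm of the coefficients of the (unique) normal form of `p`. -/
def l1 (p : W.carrier) : ℝ := (W.basis.repr p).sum fun _ c => ‖c‖

/-- The degree of `p`: the maximal `‖s‖₁ + ‖t‖₁` over monomials appearing in the normal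
form of `p`. -/
def deg (p : W.carrier) : ℕ :=
  (W.basis.repr p).support.sup fun st => (∑ i, st.1 i) + (∑ i, st.2 i)

/-- `p` is a sum of squares, i.e. `p ∈ Σ²`. -/
def IsSOS (p : W.carrier) : Prop :=
  ∃ (N : ℕ) (f : Fin N → W.carrier), p = ∑ i, star (f i) * f i

/-- `p ∈ Σ²_k`: `p` is a sum of squares of elements of degree at most `k`. -/
def IsSOSdeg (k : ℕ) (p : W.carrier) : Prop :=
  ∃ (N : ℕ) (f : Fin N → W.carrier), (∀ i, W.deg (f i) ≤ k) ∧ p = ∑ i, star (f i) * f i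

/-- The element `g^r_c = ∑_{‖t‖₁ ≤ r} (n-1)!/(c^{‖t‖₁} (n+‖t‖₁-1)!) • a^t (a^t)*`. -/
def gpoly (c : ℝ) (r : ℕ) : W.carrier :=
  ∑ t ∈ (Fintype.piFinset fun _ : Fin n => Finset.range (r + 1)).filter
      (fun t => ∑ i, t i ≤ r),
    ((Nat.factorial (n - 1) : ℂ) /
        ((c : ℂ) ^ (∑ i, t i) * (Nat.factorial (n + (∑ i, t i) - 1) : ℂ))) •
      (W.amon t * star (W.amon t))

/-- The value in `W` of a single letter (`Sum.inl i ↦ a i`, `Sum.inr i ↦ (a i)*`). -/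
def letterVal : Fin n ⊕ Fin n → W.carrier
  | Sum.inl i => W.a i
  | Sum.inr i => star (W.a i)

/-- The value in `W` of a word (monomial) in the letters `a_1,…,a_n,a_1*,…,a_n*`. -/
def wordVal (w : List (Fin n ⊕ Fin n)) : W.carrier := (w.map W.letterVal).prod

end WeylAlgebra

/-- The domain of the Schrödinger representation: finitely supported functions
`ℕ^n → ℂ`. -/
abbrev DSpace (n : ℕ) := (Fin n → ℕ) →₀ ℂ

/-- The number basis vector `e_m`. -/
def eVec {n : ℕ} (m : Fin n → ℕ) : DSpace n := Finsupp.single m 1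

/-- The inner product `⟨f, g⟩ = ∑_m conj (f m) * g m` on `DSpace n`
(antilinear in the first argument). -/
def innerD {n : ℕ} (f g : DSpace n) : ℂ := f.sum fun m c => (starRingEnd ℂ) c * g m

/-- The Schrödinger (Fock) representation of the Weyl algebra `W` on `DSpace n`,
specified by its action on the number basis. -/
structure Schrodinger {n : ℕ} (W : WeylAlgebra n) where
  rep : W.carrier →ₐ[ℂ] Module.End ℂ (DSpace n)
  rep_a : ∀ (i : Fin n) (m : Fin n → ℕ),
    rep (W.a i) (eVec m) =
      (Real.sqrt (m i) : ℂ) • eVec (Function.update m i (m i - 1))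
  rep_astar : ∀ (i : Fin n) (m : Fin n → ℕ),
    rep (star (W.a i)) (eVec m) =
      (Real.sqrt (m i + 1) : ℂ) • eVec (Function.update m i (m i + 1))

namespace Schrodinger

variable {n : ℕ} {W : WeylAlgebra n} (S : Schrodinger W)

/-- `π(p) ≥ 0`: the quadratic form of `π(p)` is nonnegative on the domain. -/
def PiNonneg (p : W.carrier) : Prop := ∀ φ : DSpace n, 0 ≤ innerD φ (S.rep p φ)

/-- The set of energies `⟨φ, π(p) φ⟩` over normalized `φ` in the domain. -/
def energySet (p : W.carrier) : Set ℝ :=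
  { x | ∃ φ : DSpace n, innerD φ φ = 1 ∧ (innerD φ (S.rep p φ)).re = x }

/-- `λ_inf(p)`, the infimum of `⟨φ, π(p) φ⟩` over normalized `φ`. -/
def lambdaInf (p : W.carrier) : ℝ := sInf (S.energySet p)

end Schrodinger


section CCRLemmas
variable {R : Type} [Ring R] {A S : R}

lemma ccr_mul_pow (h : A * S = S * A + 1) : ∀ m : ℕ,
    A * S ^ m = S ^ m * A + m • S ^ (m - 1)
  | 0 => by simp
  | (m+1) => by
    have ih := ccr_mul_pow h m
    have h1 : A * S ^ (m + 1) = (A * S ^ m) * S := by rw [pow_succ, mul_assoc]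
    rw [h1, ih, add_mul, smul_mul_assoc, mul_assoc, h, mul_add, mul_one]
    cases m with
    | zero => simp
    | succ m =>
      have : S ^ (m + 1 - 1) * S = S ^ (m + 1) := by
        rw [Nat.add_sub_cancel, ← pow_succ]
      rw [this, ← mul_assoc, ← pow_succ, Nat.add_sub_cancel, succ_nsmul]
      module

lemma ccr_pow_mul_pow (h : A * S = S * A + 1) (p q : ℕ) :
    A ^ p * S ^ q = ∑ k ∈ Finset.range (p+1),
      ((p.choose k) * (q.choose k) * (k.factorial)) • (S ^ (q-k) * A ^ (p-k)) := by
  induction p with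
  | zero => simp
  | succ p ih =>
    have h1 : A ^ (p+1) * S ^ q = A * (A ^ p * S ^ q) := by
      rw [pow_succ']; rw [mul_assoc]
    rw [h1, ih, Finset.mul_sum]
    simp only [mul_smul_comm]
    set c : ℕ → ℕ := fun k => p.choose k * q.choose k * k.factorial with hc
    set T : ℕ → R := fun k => S ^ (q-k) * A ^ (p+1-k) with hT
    have key : ∀ k ∈ Finset.range (p+1),
        (c k) • (A * (S ^ (q-k) * A ^ (p-k)))
        = (c k) • T k + (c k * (q-k)) • T (k+1) := by
      intro k hk
      rw [Finset.mem_range] at hk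
      rw [← mul_assoc, ccr_mul_pow h (q-k), add_mul, smul_mul_assoc,
        mul_assoc (S^(q-k))]
      have e1 : A * A ^ (p - k) = A ^ (p + 1 - k) := by
        rw [← pow_succ']; congr 1; omega
      have e2 : q - k - 1 = q - (k+1) := by omega
      have e3 : p - k = p + 1 - (k + 1) := by omega
      rw [e1, e2, e3, smul_add, smul_smul]
    rw [Finset.sum_congr rfl key, Finset.sum_add_distrib]
    have expand1 : ∑ k ∈ Finset.range (p+1), (c k) • T k
        = (1:ℕ) • T 0 + ∑ k ∈ Finset.range (p+1), (c (k+1)) • T (k+1) := by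
      rw [Finset.sum_range_succ' (fun k => (c k) • T k) p]
      have hz : c (p+1) = 0 := by simp [hc, Nat.choose_succ_self]
      rw [Finset.sum_range_succ (fun k => (c (k+1)) • T (k+1)) p, hz, zero_smul,
        add_zero, hc]
      simp [add_comm]
    rw [expand1]
    rw [Finset.sum_range_succ' (fun k =>
      ((p+1).choose k * (q.choose k) * (k.factorial)) • (S ^ (q-k) * A ^ (p+1-k))) (p+1)]
    have split : ∀ k ∈ Finset.range (p+1),
        ((p+1).choose (k+1) * (q.choose (k+1)) * ((k+1).factorial)) •
          (S ^ (q-(k+1)) * A ^ (p+1-(k+1)))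
        = (c (k+1)) • T (k+1) + (c k * (q-k)) • T (k+1) := by
      intro k hk
      have pas : (p+1).choose (k+1) = p.choose k + p.choose (k+1) :=
        Nat.choose_succ_succ p k
      have cr : q.choose (k+1) * (k+1) = q.choose k * (q - k) :=
        Nat.choose_succ_right_eq q k
      have hcoef : (p+1).choose (k+1) * (q.choose (k+1)) * ((k+1).factorial)
          = c (k+1) + c k * (q-k) := by
        rw [pas, add_mul, add_mul, add_comm]
        congr 1
        calc p.choose k * q.choose (k+1) * (k+1).factorial
            = p.choose k * (q.choose (k+1) * (k+1)) * k.factorial := by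
              rw [Nat.factorial_succ]; ring
          _ = c k * (q-k) := by rw [cr, hc]; ring
      rw [hcoef, add_smul]
    rw [Finset.sum_congr rfl split, Finset.sum_add_distrib]
    simp [hT]
    abel
end CCRLemmas

section ListLemmas
variable {R : Type} [Ring R]

lemma sum_piFinset_succ' {M : Type*} [AddCommMonoid M] {m : ℕ} (K : Fin (m+1) → Finset ℕ)
    (F : (Fin (m+1) → ℕ) → M) :
    ∑ k ∈ Fintype.piFinset K, F k
      = ∑ k0 ∈ K 0, ∑ kt ∈ Fintype.piFinset (Fin.tail K), F (Fin.cons k0 kt) := by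
  rw [← Finset.sum_product']
  apply Finset.sum_nbij' (fun k => (k 0, Fin.tail k)) (fun x => Fin.cons x.1 x.2)
  · intro k hk
    rw [Fin.mem_piFinset_iff_zero_tail] at hk
    simpa using hk
  · intro x hx
    rw [Finset.mem_product] at hx
    rw [Fin.mem_piFinset_iff_zero_tail]
    simpa using hx
  · intro k _; exact Fin.cons_self_tail k
  · intro x _; simp
  · intro k _; rw [Fin.cons_self_tail]

lemma listOfFn_prod_sum : ∀ (m : ℕ) (K : Fin m → Finset ℕ) (f : (i : Fin m) → ℕ → R),
    (List.ofFn fun i => ∑ k ∈ K i, f i k).prod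
      = ∑ k ∈ Fintype.piFinset K, (List.ofFn fun i => f i (k i)).prod
  | 0, K, f => by
    simp [Fintype.piFinset_of_isEmpty]
  | (m+1), K, f => by
    rw [List.ofFn_succ, List.prod_cons, listOfFn_prod_sum m (fun i => K i.succ)
      (fun i => f i.succ), Finset.sum_mul_sum,
      sum_piFinset_succ' K (fun k => (List.ofFn fun i => f i (k i)).prod)]
    apply Finset.sum_congr rfl
    intro k0 _
    apply Finset.sum_congr rfl
    intro kt _
    rw [List.ofFn_succ, List.prod_cons]
    simp [Fin.tail]

lemma listOfFn_prod_mul : ∀ (m : ℕ) (u v : Fin m → R)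
    (_ : ∀ i j, i ≠ j → Commute (v i) (u j)),
    (List.ofFn fun i => u i * v i).prod = (List.ofFn u).prod * (List.ofFn v).prod
  | 0, u, v, h => by simp
  | (m+1), u, v, h => by
    rw [List.ofFn_succ, List.ofFn_succ, List.ofFn_succ, List.prod_cons, List.prod_cons,
      List.prod_cons, listOfFn_prod_mul m (fun i => u i.succ) (fun i => v i.succ)
        (fun i j hij => h i.succ j.succ (by simpa using hij))]
    have hcomm : Commute (v 0) ((List.ofFn fun i => u i.succ).prod) := by
      apply Commute.list_prod_right
      intro x hx
      rw [List.mem_ofFn] at hx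
      obtain ⟨j, rfl⟩ := hx
      exact h 0 j.succ (Fin.succ_ne_zero j).symm
    calc u 0 * v 0 * ((List.ofFn fun i => u i.succ).prod * (List.ofFn fun i => v i.succ).prod)
        = u 0 * (v 0 * (List.ofFn fun i => u i.succ).prod) * (List.ofFn fun i => v i.succ).prod := by
          rw [mul_assoc, mul_assoc, mul_assoc]
      _ = u 0 * ((List.ofFn fun i => u i.succ).prod * v 0) * (List.ofFn fun i => v i.succ).prod := by
          rw [hcomm.eq]
      _ = u 0 * (List.ofFn fun i => u i.succ).prod * (v 0 * (List.ofFn fun i => v i.succ).prod) := by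
          rw [mul_assoc, mul_assoc, mul_assoc]

lemma listOfFn_prod_nsmul : ∀ (m : ℕ) (c : Fin m → ℕ) (x : Fin m → R),
    (List.ofFn fun i => c i • x i).prod = (∏ i, c i) • (List.ofFn x).prod
  | 0, c, x => by simp
  | (m+1), c, x => by
    rw [List.ofFn_succ, List.prod_cons, List.ofFn_succ, List.prod_cons,
      listOfFn_prod_nsmul m (fun i => c i.succ) (fun i => x i.succ),
      Fin.prod_univ_succ, smul_mul_assoc, mul_smul_comm, smul_smul, mul_comm]

lemma star_listOfFn_prod {R : Type} [Ring R] [StarRing R] :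
    ∀ (m : ℕ) (f : Fin m → R) (_ : ∀ i j, Commute (star (f i)) (star (f j))),
      star ((List.ofFn f).prod) = (List.ofFn fun i => star (f i)).prod
  | 0, f, h => by simp
  | (m+1), f, h => by
    rw [List.ofFn_succ, List.prod_cons, star_mul,
      star_listOfFn_prod m (fun i => f i.succ) (fun i j => h i.succ j.succ),
      List.ofFn_succ, List.prod_cons]
    have hcomm : Commute (star (f 0)) ((List.ofFn fun i => star (f i.succ)).prod) := by
      apply Commute.list_prod_right
      intro x hx
      rw [List.mem_ofFn] at hx
      obtain ⟨j, rfl⟩ := hx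
      exact (h 0 j.succ)
    exact hcomm.eq.symm
end ListLemmas

section NumLemmas

lemma single_coeff_sum_le (m : ℕ) :
    ∑ k ∈ Finset.range (m+1), (m.choose k * m.choose k * k.factorial)
      ≤ 2 ^ m * m.factorial := by
  calc ∑ k ∈ Finset.range (m+1), (m.choose k * m.choose k * k.factorial)
      ≤ ∑ k ∈ Finset.range (m+1), m.choose k * m.factorial := by
        apply Finset.sum_le_sum
        intro k hk
        rw [Finset.mem_range, Nat.lt_succ_iff] at hk
        rw [mul_assoc]
        apply Nat.mul_le_mul_left
        calc m.choose k * k.factorial ≤ m.choose k * k.factorial * (m-k).factorial :=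
              Nat.le_mul_of_pos_right _ (Nat.factorial_pos _)
          _ = m.factorial := Nat.choose_mul_factorial_mul_factorial hk
    _ = 2 ^ m * m.factorial := by
        rw [← Finset.sum_mul, Nat.sum_range_choose]

lemma sum_coeff_le {n : ℕ} (t : Fin n → ℕ) :
    ∑ k ∈ Fintype.piFinset (fun i => Finset.range (t i + 1)),
        ∏ i, ((t i).choose (k i) * (t i).choose (k i) * (k i).factorial)
      ≤ 2 ^ (∑ i, t i) * ∏ i, (t i).factorial := by
  have hps := Finset.prod_univ_sum (fun i : Fin n => Finset.range (t i + 1))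
    (fun i k => ((t i).choose k * (t i).choose k * k.factorial))
  rw [← hps]
  calc ∏ i, ∑ k ∈ Finset.range (t i + 1),
        ((t i).choose k * (t i).choose k * k.factorial)
      ≤ ∏ i, 2 ^ (t i) * (t i).factorial :=
        Finset.prod_le_prod' (fun i _ => single_coeff_sum_le (t i))
    _ = 2 ^ (∑ i, t i) * ∏ i, (t i).factorial := by
        rw [Finset.prod_mul_distrib, Finset.prod_pow_eq_pow_sum]

lemma card_fiber_le (n d : ℕ) (s : Finset (Fin n → ℕ)) (hs : ∀ t ∈ s, ∑ i, t i = d) :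
    s.card ≤ (n + d - 1).choose d := by
  classical
  have hcard : ((Finset.univ : Finset (Sym (Fin n) d)).image Sym.toMultiset).card
      = (n + d - 1).choose d := by
    have hinj : Function.Injective (Sym.toMultiset : Sym (Fin n) d → Multiset (Fin n)) :=
      fun x y h => Subtype.ext h
    rw [Finset.card_image_of_injective _ hinj, Finset.card_univ,
      Sym.card_sym_eq_choose, Fintype.card_fin]
  refine le_trans (Finset.card_le_card_of_injOn
    (fun t => ∑ i, Multiset.replicate (t i) i) ?_ ?_) hcard.le
  · intro t ht
    rw [Finset.mem_coe, Finset.mem_image]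
    refine ⟨⟨∑ i, Multiset.replicate (t i) i, ?_⟩, Finset.mem_univ _, rfl⟩
    have key : ∀ (u : Finset (Fin n)),
        Multiset.card (∑ i ∈ u, Multiset.replicate (t i) i) = ∑ i ∈ u, t i := by
      intro u
      induction u using Finset.induction_on with
      | empty => simp
      | @insert j u hju ih =>
        rw [Finset.sum_insert hju, Finset.sum_insert hju, Multiset.card_add,
          Multiset.card_replicate, ih]
    rw [key]
    exact hs t ht
  · intro t _ t' _ h
    funext i
    have := congrArg (Multiset.count i) h
    simpa [Multiset.count_sum', Multiset.count_replicate] using this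
end NumLemmas

namespace WeylAlgebra
variable {n : ℕ} (W : WeylAlgebra n)

lemma comm_as {i j : Fin n} (h : i ≠ j) :
    W.a i * star (W.a j) = star (W.a j) * W.a i := by
  have h2 := W.ccr i j
  rw [if_neg h] at h2
  exact sub_eq_zero.mp h2

lemma ccr_self (i : Fin n) : W.a i * star (W.a i) = star (W.a i) * W.a i + 1 := by
  have h2 := W.ccr i i
  rw [if_pos rfl] at h2
  exact sub_eq_iff_eq_add'.mp h2

lemma star_amon (t : Fin n → ℕ) :
    star (W.amon t) = (List.ofFn fun i => star (W.a i) ^ t i).prod := by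
  unfold amon
  rw [star_listOfFn_prod]
  · simp [star_pow]
  · intro i j
    simp only [star_pow]
    apply Commute.pow_pow
    rcases eq_or_ne i j with rfl | hij
    · exact Commute.refl _
    · exact W.comm_ss i j

lemma amon_mul_star (t : Fin n → ℕ) :
    W.amon t * star (W.amon t)
      = ∑ k ∈ Fintype.piFinset (fun i => Finset.range (t i + 1)),
          (∏ i, ((t i).choose (k i) * (t i).choose (k i) * (k i).factorial)) •
            W.nmon (fun i => t i - k i) (fun i => t i - k i) := by
  rw [W.star_amon]
  show (List.ofFn fun i => W.a i ^ t i).prod * _ = _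
  rw [← listOfFn_prod_mul n (fun i => W.a i ^ t i) (fun i => star (W.a i) ^ t i)
    (fun i j hij => Commute.pow_pow (by
      show star (W.a i) * W.a j = W.a j * star (W.a i)
      exact (W.comm_as (Ne.symm hij)).symm) _ _)]
  have expand : (fun i : Fin n => W.a i ^ t i * star (W.a i) ^ t i)
      = fun i => ∑ k ∈ Finset.range (t i + 1),
          (((t i).choose k) * ((t i).choose k) * (k.factorial)) •
            (star (W.a i) ^ (t i - k) * W.a i ^ (t i - k)) := by
    funext i
    exact ccr_pow_mul_pow (W.ccr_self i) (t i) (t i)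
  rw [expand, listOfFn_prod_sum n (fun i => Finset.range (t i + 1))
    (fun i k => (((t i).choose k) * ((t i).choose k) * (k.factorial)) •
      (star (W.a i) ^ (t i - k) * W.a i ^ (t i - k)))]
  apply Finset.sum_congr rfl
  intro k _
  rw [listOfFn_prod_nsmul n
    (fun i => ((t i).choose (k i)) * ((t i).choose (k i)) * ((k i).factorial))
    (fun i => star (W.a i) ^ (t i - k i) * W.a i ^ (t i - k i))]
  congr 1
  rw [listOfFn_prod_mul n (fun i => star (W.a i) ^ (t i - k i))
    (fun i => W.a i ^ (t i - k i))
    (fun i j hij => Commute.pow_pow (W.comm_as hij) _ _)]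
  rfl

lemma l1_add_le (p q : W.carrier) : W.l1 (p + q) ≤ W.l1 p + W.l1 q := by
  classical
  unfold l1
  rw [map_add]
  rw [Finsupp.sum_of_support_subset _ Finsupp.support_add
      _ (fun i _ => norm_zero),
    Finsupp.sum_of_support_subset (W.basis.repr p) Finset.subset_union_left
      _ (fun i _ => norm_zero),
    Finsupp.sum_of_support_subset (W.basis.repr q) Finset.subset_union_right
      _ (fun i _ => norm_zero),
    ← Finset.sum_add_distrib]
  apply Finset.sum_le_sum
  intro x _
  rw [Finsupp.add_apply]
  exact norm_add_le _ _

lemma l1_sum_le {α : Type*} (s : Finset α) (f : α → W.carrier) :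
    W.l1 (∑ x ∈ s, f x) ≤ ∑ x ∈ s, W.l1 (f x) := by
  classical
  induction s using Finset.induction_on with
  | empty => simp [l1]
  | @insert x s hx ih =>
    rw [Finset.sum_insert hx, Finset.sum_insert hx]
    exact le_trans (W.l1_add_le _ _) (by linarith)

lemma l1_smul_basis (γ : ℂ) (st : (Fin n → ℕ) × (Fin n → ℕ)) :
    W.l1 (γ • W.basis st) = ‖γ‖ := by
  unfold l1
  rw [map_smul, Module.Basis.repr_self, Finsupp.smul_single, smul_eq_mul, mul_one]
  exact Finsupp.sum_single_index norm_zero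

end WeylAlgebra

/-- For `c > 2`, `l1(g^r_c) ≤ c/(c-2)`. -/
theorem l1_gpoly_bound {n : ℕ} (hn : 1 ≤ n) (c : ℝ) (hc : 2 < c) (r : ℕ)
    (W : WeylAlgebra n) :
    W.l1 (W.gpoly c r) ≤ c / (c - 2) := by
  classical
  have hc0 : (0:ℝ) < c := by linarith
  set T : Finset (Fin n → ℕ) :=
    (Fintype.piFinset fun _ : Fin n => Finset.range (r + 1)).filter
      (fun t => ∑ i, t i ≤ r) with hT
  set γ : (Fin n → ℕ) → ℂ := fun t => ((Nat.factorial (n - 1) : ℂ) /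
        ((c : ℂ) ^ (∑ i, t i) * (Nat.factorial (n + (∑ i, t i) - 1) : ℂ))) with hγ
  set F : (Fin n → ℕ) → ℝ := fun t =>
    (Nat.factorial (n-1) : ℝ) / (c ^ (∑ i, t i) * (Nat.factorial (n + (∑ i, t i) - 1)))
      * (2 ^ (∑ i, t i) * ((∏ i, (t i).factorial : ℕ) : ℝ)) with hF
  have habs : ∀ t : Fin n → ℕ, ‖γ t‖
      = (Nat.factorial (n-1) : ℝ)
          / (c ^ (∑ i, t i) * (Nat.factorial (n + (∑ i, t i) - 1))) := by
    intro t
    simp only [hγ]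
    rw [norm_div, norm_mul, norm_pow, Complex.norm_natCast, Complex.norm_natCast,
      Complex.norm_real, Real.norm_eq_abs, abs_of_pos hc0]
  have step1 : ∀ t : Fin n → ℕ,
      W.l1 (γ t • (W.amon t * star (W.amon t))) ≤ F t := by
    intro t
    rw [W.amon_mul_star t, Finset.smul_sum]
    have rewr : ∀ k ∈ Fintype.piFinset (fun i => Finset.range (t i + 1)),
        γ t • ((∏ i, ((t i).choose (k i) * (t i).choose (k i) * (k i).factorial)) •
            W.nmon (fun i => t i - k i) (fun i => t i - k i))
        = (γ t * ((∏ i, ((t i).choose (k i) * (t i).choose (k i) * (k i).factorial) : ℕ) : ℂ)) •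
            W.basis (fun i => t i - k i, fun i => t i - k i) := by
      intro k _
      rw [← Nat.cast_smul_eq_nsmul ℂ, smul_smul]
      congr 1
      rw [W.basis_eq]
      rfl
    rw [Finset.sum_congr rfl rewr]
    refine le_trans (W.l1_sum_le _ _) ?_
    have hterm : ∀ k ∈ Fintype.piFinset (fun i => Finset.range (t i + 1)),
        W.l1 ((γ t * ((∏ i, ((t i).choose (k i) * (t i).choose (k i) * (k i).factorial) : ℕ) : ℂ)) •
            W.basis (fun i => t i - k i, fun i => t i - k i))
        = ‖γ t‖
            * ((∏ i, ((t i).choose (k i) * (t i).choose (k i) * (k i).factorial) : ℕ) : ℝ) := by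
      intro k _
      rw [W.l1_smul_basis, norm_mul, Complex.norm_natCast]
    rw [Finset.sum_congr rfl hterm, ← Finset.mul_sum, habs t]
    simp only [hF]
    apply mul_le_mul_of_nonneg_left _ (by positivity)
    rw [← Nat.cast_sum]
    have hnum := sum_coeff_le t
    calc ((∑ k ∈ Fintype.piFinset (fun i => Finset.range (t i + 1)),
            ∏ i, ((t i).choose (k i) * (t i).choose (k i) * (k i).factorial) : ℕ) : ℝ)
        ≤ ((2 ^ (∑ i, t i) * ∏ i, (t i).factorial : ℕ) : ℝ) := by exact_mod_cast hnum
      _ = 2 ^ (∑ i, t i) * ((∏ i, (t i).factorial : ℕ) : ℝ) := by push_cast; ring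
  have hgp : W.gpoly c r = ∑ t ∈ T, γ t • (W.amon t * star (W.amon t)) := rfl
  rw [hgp]
  refine le_trans (W.l1_sum_le T _) ?_
  refine le_trans (Finset.sum_le_sum (fun t _ => step1 t)) ?_
  have hmaps : ∀ t ∈ T, (∑ i, t i) ∈ Finset.range (r+1) := by
    intro t ht
    rw [hT, Finset.mem_filter] at ht
    rw [Finset.mem_range]
    omega
  rw [← Finset.sum_fiberwise_of_maps_to hmaps F]
  have hdsum : ∀ d ∈ Finset.range (r+1),
      ∑ t ∈ T.filter (fun t => (∑ i, t i) = d), F t ≤ (2/c)^d := by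
    intro d _
    set s := T.filter (fun t => (∑ i, t i) = d) with hs
    have hmem : ∀ t ∈ s, (∑ i, t i) = d := by
      intro t ht; rw [hs, Finset.mem_filter] at ht; exact ht.2
    set Cd : ℝ := (Nat.factorial (n-1) : ℝ) * 2^d / (c^d * (Nat.factorial (n+d-1))) with hCd
    have hFt : ∀ t ∈ s, F t = Cd * ((∏ i, (t i).factorial : ℕ) : ℝ) := by
      intro t ht
      simp only [hF, hCd, hmem t ht]
      ring
    rw [Finset.sum_congr rfl hFt, ← Finset.mul_sum]
    have hP : ∑ t ∈ s, ((∏ i, (t i).factorial : ℕ) : ℝ)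
        ≤ (s.card : ℝ) * (d.factorial : ℝ) := by
      have hb : ∀ t ∈ s, ((∏ i, (t i).factorial : ℕ) : ℝ) ≤ (d.factorial : ℝ) := by
        intro t ht
        have hdvd : (∏ i, (t i).factorial) ∣ d.factorial := by
          have h3 := Nat.prod_factorial_dvd_factorial_sum Finset.univ t
          rwa [hmem t ht] at h3
        exact_mod_cast Nat.le_of_dvd d.factorial_pos hdvd
      have h4 := Finset.sum_le_card_nsmul s _ _ hb
      simpa [nsmul_eq_mul] using h4
    have hcard : (s.card : ℝ) ≤ ((n + d - 1).choose d : ℝ) := by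
      exact_mod_cast card_fiber_le n d s hmem
    have hkeyN : (n+d-1).choose d * d.factorial * (n-1).factorial = (n+d-1).factorial := by
      have h1 := Nat.choose_mul_factorial_mul_factorial (show d ≤ n+d-1 by omega)
      rwa [show n+d-1-d = n-1 by omega] at h1
    have hkeyR : ((n+d-1).choose d : ℝ) * (d.factorial : ℝ) * ((n-1).factorial : ℝ)
        = ((n+d-1).factorial : ℝ) := by exact_mod_cast hkeyN
    have hCd0 : 0 ≤ Cd := by
      rw [hCd]; positivity
    have hfin : Cd * (((n+d-1).choose d : ℝ) * (d.factorial : ℝ)) = (2/c)^d := by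
      rw [hCd, div_pow]
      rw [div_mul_eq_mul_div, div_eq_div_iff (by positivity) (by positivity)]
      push_cast
      linear_combination (2:ℝ)^d * c^d * hkeyR
    calc Cd * ∑ t ∈ s, ((∏ i, (t i).factorial : ℕ) : ℝ)
        ≤ Cd * (((n+d-1).choose d : ℝ) * (d.factorial : ℝ)) := by
          apply mul_le_mul_of_nonneg_left _ hCd0
          exact le_trans hP (mul_le_mul_of_nonneg_right hcard (by positivity))
      _ = (2/c)^d := hfin
  refine le_trans (Finset.sum_le_sum hdsum) ?_
  have hx0 : (0:ℝ) ≤ 2/c := by positivity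
  have hx1 : 2/c < 1 := by rw [div_lt_one hc0]; linarith
  have h1x : (0:ℝ) < 1 - 2/c := by linarith
  have hgeo : ∑ d ∈ Finset.range (r+1), (2/c)^d ≤ 1/(1 - 2/c) := by
    rw [geom_sum_eq (ne_of_lt hx1)]
    rw [show ((2/c)^(r+1) - 1)/((2/c) - 1) = (1 - (2/c)^(r+1))/(1 - 2/c) by
      rw [← neg_div_neg_eq]; ring_nf]
    apply (div_le_div_iff_of_pos_right h1x).mpr
    nlinarith [pow_nonneg hx0 (r+1)]
  refine le_trans hgeo ?_
  rw [show (1:ℝ) - 2/c = (c-2)/c by field_simp, one_div_div]
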